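/- Let (Ω, ℙ) be a probability space, let Q̂ and Ẑ be real random variables with Ẑ(ω) ≠ 0 for almost every ω, and let Q ∈ ℝ and Z ∈ ℝ with Z ≠ 0. Then E[(Q/Z − Q̂/Ẑ)²] ≤ (2/Z²) · ( E[(Q̂ − Q)²] + ‖Q̂/Ẑ‖_{L⁴}² · ‖Ẑ − Z‖_{L⁴}² ), where ‖X‖_{L⁴} = (E[|X|⁴])^{1/4}; in particular the inequality holds whenever the right-hand side is finite. -/

import Mathlib

open MeasureTheory

lemma sq_lintegral_eq {Ω : Type*} [MeasurableSpace Ω] (P : Measure Ω) (f : Ω → ℝ) :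
    ∫⁻ ω, ENNReal.ofReal ((f ω) ^ 2) ∂P = (eLpNorm f 2 P) ^ 2 := by
  rw [eLpNorm_eq_lintegral_rpow_enorm_toReal (by norm_num) (by norm_num)]
  rw [← ENNReal.rpow_natCast _ 2, ← ENNReal.rpow_mul]
  norm_num
  congr 1
  ext ω
  rw [Real.enorm_eq_ofReal_abs, ← ENNReal.ofReal_pow (abs_nonneg _), sq_abs]

theorem statement10 {Ω : Type*} [MeasurableSpace Ω] (P : Measure Ω)
    [IsProbabilityMeasure P] (Qhat Zhat : Ω → ℝ)
    (hQm : Measurable Qhat) (hZm : Measurable Zhat)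
    (hZne : ∀ᵐ ω ∂P, Zhat ω ≠ 0)
    (Q Z : ℝ) (hZ : Z ≠ 0) :
    ∫⁻ ω, ENNReal.ofReal ((Q / Z - Qhat ω / Zhat ω) ^ 2) ∂P
      ≤ ENNReal.ofReal (2 / Z ^ 2) *
        (∫⁻ ω, ENNReal.ofReal ((Qhat ω - Q) ^ 2) ∂P
          + (eLpNorm (fun ω => Qhat ω / Zhat ω) 4 P) ^ 2
            * (eLpNorm (fun ω => Zhat ω - Z) 4 P) ^ 2) := by
  set X : Ω → ℝ := fun ω => Qhat ω / Zhat ω with hX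
  have hXm : Measurable X := hQm.div hZm
  have hpt : ∀ᵐ ω ∂P, ENNReal.ofReal ((Q / Z - X ω) ^ 2)
      ≤ ENNReal.ofReal (2 / Z ^ 2) *
        (ENNReal.ofReal ((Qhat ω - Q) ^ 2) + ENNReal.ofReal ((X ω * (Zhat ω - Z)) ^ 2)) := by
    filter_upwards [hZne] with ω hz
    rw [← ENNReal.ofReal_add (by positivity) (by positivity),
        ← ENNReal.ofReal_mul (by positivity)]
    apply ENNReal.ofReal_le_ofReal
    have key : Q / Z - X ω = ((Q - Qhat ω) + X ω * (Zhat ω - Z)) / Z := by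
      simp only [hX]
      field_simp
      ring
    rw [key, div_pow]
    have h1 : ((Q - Qhat ω) + X ω * (Zhat ω - Z)) ^ 2
        ≤ 2 * ((Qhat ω - Q) ^ 2 + (X ω * (Zhat ω - Z)) ^ 2) := by
      nlinarith [sq_nonneg ((Q - Qhat ω) - X ω * (Zhat ω - Z))]
    have hZ2 : (0:ℝ) < Z ^ 2 := by positivity
    calc ((Q - Qhat ω) + X ω * (Zhat ω - Z)) ^ 2 / Z ^ 2
        ≤ (2 * ((Qhat ω - Q) ^ 2 + (X ω * (Zhat ω - Z)) ^ 2)) / Z ^ 2 := by gcongr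
      _ = 2 / Z ^ 2 * ((Qhat ω - Q) ^ 2 + (X ω * (Zhat ω - Z)) ^ 2) := by ring
  show ∫⁻ ω, ENNReal.ofReal ((Q / Z - X ω) ^ 2) ∂P ≤ _
  have hpqr : (1 : ENNReal) / 2 = 1 / 4 + 1 / 4 := by
    rw [ENNReal.div_add_div_same]
    rw [ENNReal.div_eq_div_iff (by norm_num) (by norm_num) (by norm_num) (by norm_num)]
    norm_num
  have hCS : eLpNorm (fun ω => X ω * (Zhat ω - Z)) 2 P
      ≤ eLpNorm X 4 P * eLpNorm (fun ω => Zhat ω - Z) 4 P := by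
    have h := eLpNorm_smul_le_mul_eLpNorm (μ := P) (p := 4) (q := 4) (r := 2)
      (f := fun ω => Zhat ω - Z) (φ := X)
      ((hZm.sub measurable_const).aestronglyMeasurable) hXm.aestronglyMeasurable (hpqr := ⟨by simpa [one_div] using hpqr.symm⟩)
    exact h
  calc ∫⁻ ω, ENNReal.ofReal ((Q / Z - X ω) ^ 2) ∂P
      ≤ ∫⁻ ω, ENNReal.ofReal (2 / Z ^ 2) *
          (ENNReal.ofReal ((Qhat ω - Q) ^ 2) + ENNReal.ofReal ((X ω * (Zhat ω - Z)) ^ 2)) ∂P :=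
        lintegral_mono_ae hpt
    _ = ENNReal.ofReal (2 / Z ^ 2) *
          (∫⁻ ω, ENNReal.ofReal ((Qhat ω - Q) ^ 2) ∂P
            + ∫⁻ ω, ENNReal.ofReal ((X ω * (Zhat ω - Z)) ^ 2) ∂P) := by
        rw [lintegral_const_mul' _ _ ENNReal.ofReal_ne_top,
          lintegral_add_left (by measurability)]
    _ ≤ _ := by
        gcongr
        rw [sq_lintegral_eq P (fun ω => X ω * (Zhat ω - Z))]
        calc eLpNorm (fun ω => X ω * (Zhat ω - Z)) 2 P ^ 2
            ≤ (eLpNorm X 4 P * eLpNorm (fun ω => Zhat ω - Z) 4 P) ^ 2 := by gcongr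
          _ = eLpNorm X 4 P ^ 2 * eLpNorm (fun ω => Zhat ω - Z) 4 P ^ 2 := mul_pow _ _ _
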